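/- arXiv:1501.06911 — 5 statements merged into one kernel-verified Lean document; each statement's English description precedes it below -/
import Mathlib

section
/- Let N ≥ 1, let K ≤ N, and let V be a 2N×K complex matrix with V†V = I. Write V = [V₀; V₁] where V₀ is the top N×K block and V₁ the bottom N×K block. Then there exist N×N complex unitary matrices A₀ and A₁, real diagonal N×N matrices C and S with C² + S² = I, and an N×K complex matrix W with W†W = I, such that V₀ = A₀·C·W and V₁ = A₁·S·W. -/
open Matrix

set_option maxHeartbeats 1000000

lemma col_zero_of_sq_zero {N K : ℕ} (X : Matrix (Fin N) (Fin K) ℂ) (r : ℝ) (k : Fin K)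
    (hX : ∑ j, (starRingEnd ℂ) (X j k) * X j k = ((r : ℂ))^2) (hr : r = 0) (i : Fin N) :
    X i k = 0 := by
  subst hr
  have h : ∑ j, (Complex.normSq (X j k) : ℂ) = 0 := by
    simpa [Complex.normSq_eq_conj_mul_self] using hX
  have h' : ∑ j, Complex.normSq (X j k) = 0 := by
    exact_mod_cast (by push_cast at h ⊢; exact_mod_cast h : ((∑ j, Complex.normSq (X j k) : ℝ) : ℂ) = 0)
  have := (Finset.sum_eq_zero_iff_of_nonneg (fun j _ => Complex.normSq_nonneg (X j k))).mp h' i (Finset.mem_univ i)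
  exact Complex.normSq_eq_zero.mp this

lemma exists_unitary_factor {N K : ℕ} (hK : K ≤ N) (X : Matrix (Fin N) (Fin K) ℂ)
    (r : Fin N → ℝ) (hr : ∀ i, 0 ≤ r i)
    (hX : Xᴴ * X = Matrix.diagonal fun k => ((r (Fin.castLE hK k) : ℂ))^2) :
    ∃ A ∈ Matrix.unitaryGroup (Fin N) ℂ,
      X = A * Matrix.diagonal (fun i => (r i : ℂ))
            * (Matrix.of fun i k => if i = Fin.castLE hK k then (1:ℂ) else 0) := by
  classical
  -- candidate columns
  set v : Fin N → EuclideanSpace ℂ (Fin N) :=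
    fun i => if h : (i : ℕ) < K then WithLp.toLp 2 (fun j => X j ⟨i, h⟩ / (r i : ℂ)) else 0 with hv
  set s : Set (Fin N) := {i | (i : ℕ) < K ∧ r i ≠ 0} with hs
  have hXapp : ∀ k l : Fin K, ∑ j, (starRingEnd ℂ) (X j k) * X j l
      = if k = l then ((r (Fin.castLE hK k) : ℂ))^2 else 0 := by
    intro k l
    have := congrFun (congrFun hX k) l
    simpa [Matrix.mul_apply, Matrix.conjTranspose_apply, Matrix.diagonal] using this
  have horth : Orthonormal ℂ (s.restrict v) := by
    rw [orthonormal_iff_ite]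
    rintro ⟨i₁, hi₁, hr₁⟩ ⟨i₂, hi₂, hr₂⟩
    have hinner : (inner ℂ (v i₁) (v i₂) : ℂ)
        = ∑ j, (starRingEnd ℂ) (v i₁ j) * (v i₂ j) := by
      simp [PiLp.inner_apply, RCLike.inner_apply, mul_comm]
    change inner ℂ (v i₁) (v i₂) = _
    rw [hinner]
    simp only [hv]
    rw [dif_pos hi₁, dif_pos hi₂]
    simp only [WithLp.ofLp_toLp]
    have key : ∑ j, (starRingEnd ℂ) (X j ⟨i₁, hi₁⟩ / (r i₁ : ℂ)) * (X j ⟨i₂, hi₂⟩ / (r i₂ : ℂ))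
        = (∑ j, (starRingEnd ℂ) (X j ⟨i₁, hi₁⟩) * X j ⟨i₂, hi₂⟩) / ((r i₁ : ℂ) * (r i₂ : ℂ)) := by
      rw [Finset.sum_div]
      congr 1; ext j
      simp [map_div₀, Complex.conj_ofReal]
      ring
    rw [key, hXapp]
    by_cases h : i₁ = i₂
    · subst h
      have hrc : ((r i₁ : ℂ)) ≠ 0 := by exact_mod_cast hr₁
      have hcast : r (Fin.castLE hK ⟨(i₁:ℕ), hi₁⟩) = r i₁ := rfl
      rw [if_pos rfl, if_pos rfl, hcast]
      field_simp
    · have hne : (⟨(i₁:ℕ), hi₁⟩ : Fin K) ≠ ⟨(i₂:ℕ), hi₂⟩ := by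
        intro hcon
        apply h
        ext
        simpa using hcon
      simp [hne, Subtype.ext_iff, h]
  obtain ⟨b, hb⟩ := horth.exists_orthonormalBasis_extension_of_card_eq
    (by simp [finrank_euclideanSpace])
  refine ⟨Matrix.of fun i j => b j i, ?_, ?_⟩
  · rw [Matrix.mem_unitaryGroup_iff']
    ext j j'
    have := orthonormal_iff_ite.mp b.orthonormal j j'
    have hinner : (inner ℂ (b j) (b j') : ℂ) = ∑ i, (starRingEnd ℂ) (b j i) * (b j' i) := by
      simp [PiLp.inner_apply, RCLike.inner_apply, mul_comm]
    rw [hinner] at this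
    simpa [Matrix.mul_apply, Matrix.star_apply, Matrix.one_apply] using this
  · ext i k
    have hsum : (Matrix.of (fun i j => b j i) * Matrix.diagonal (fun i => (r i : ℂ))
        * (Matrix.of fun i k => if i = Fin.castLE hK k then (1:ℂ) else 0)) i k
        = b (Fin.castLE hK k) i * (r (Fin.castLE hK k) : ℂ) := by
      rw [Matrix.mul_apply]
      rw [Finset.sum_eq_single (Fin.castLE hK k)]
      · simp [Matrix.mul_diagonal]
      · intro j _ hj
        simp [Matrix.mul_diagonal, hj]
      · simp
    rw [hsum]
    by_cases hrk : r (Fin.castLE hK k) = 0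
    · rw [col_zero_of_sq_zero X (r (Fin.castLE hK k)) k (by simpa using hXapp k k) hrk i, hrk]
      simp
    · have hmem : Fin.castLE hK k ∈ s := ⟨by simp, hrk⟩
      rw [hb _ hmem]
      have hlt : ((Fin.castLE hK k : Fin N) : ℕ) < K := by simp
      have hkeq : (⟨((Fin.castLE hK k : Fin N) : ℕ), hlt⟩ : Fin K) = k := Fin.ext (by simp)
      simp only [hv]
      rw [dif_pos hlt]
      simp only [hkeq]
      have hrc : ((r (Fin.castLE hK k) : ℂ)) ≠ 0 := by exact_mod_cast hrk
      field_simp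

lemma real_of_sum_conj_mul {N K : ℕ} (X : Matrix (Fin N) (Fin K) ℂ) (t : ℝ) (k : Fin K)
    (h : ∑ j, (starRingEnd ℂ) (X j k) * X j k = (t : ℂ)) : 0 ≤ t := by
  have h2 : ((∑ j, Complex.normSq (X j k) : ℝ) : ℂ) = (t : ℂ) := by
    push_cast
    simpa [Complex.normSq_eq_conj_mul_self] using h
  have h3 := Complex.ofReal_injective h2
  rw [← h3]
  exact Finset.sum_nonneg fun j _ => Complex.normSq_nonneg _

/-- The Cosine-Sine Decomposition for isometries: if `V` is a `2N × K` matrix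
with orthonormal columns, written in blocks `V = [V₀; V₁]`, then there are
unitaries `A₀, A₁`, real diagonal `C, S` with `C² + S² = I`, and an isometry
`W` with `V₀ = A₀·C·W` and `V₁ = A₁·S·W`. -/
theorem cosine_sine_decomposition_isometry (N K : ℕ) (hN : 1 ≤ N) (hK : K ≤ N)
    (V : Matrix (Fin N ⊕ Fin N) (Fin K) ℂ) (hV : Vᴴ * V = 1) :
    ∃ (A₀ A₁ : Matrix (Fin N) (Fin N) ℂ) (c s : Fin N → ℝ)
      (W : Matrix (Fin N) (Fin K) ℂ),
      A₀ ∈ Matrix.unitaryGroup (Fin N) ℂ ∧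
      A₁ ∈ Matrix.unitaryGroup (Fin N) ℂ ∧
      (Matrix.diagonal fun i => (c i : ℂ)) ^ 2
        + (Matrix.diagonal fun i => (s i : ℂ)) ^ 2 = 1 ∧
      Wᴴ * W = 1 ∧
      (Matrix.of fun i k => V (Sum.inl i) k)
        = A₀ * (Matrix.diagonal fun i => (c i : ℂ)) * W ∧
      (Matrix.of fun i k => V (Sum.inr i) k)
        = A₁ * (Matrix.diagonal fun i => (s i : ℂ)) * W := by
    classical
  set V₀ : Matrix (Fin N) (Fin K) ℂ := Matrix.of fun i k => V (Sum.inl i) k with hV₀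
  set V₁ : Matrix (Fin N) (Fin K) ℂ := Matrix.of fun i k => V (Sum.inr i) k with hV₁
  have hsum : V₀ᴴ * V₀ + V₁ᴴ * V₁ = 1 := by
    ext k l
    have h := congrFun (congrFun hV k) l
    simp only [Matrix.mul_apply, Matrix.conjTranspose_apply, Fintype.sum_sum_type] at h
    simpa [Matrix.mul_apply, Matrix.conjTranspose_apply, Matrix.add_apply, hV₀, hV₁] using h
  have hM : (V₀ᴴ * V₀).IsHermitian := isHermitian_conjTranspose_mul_self V₀
  set Q : Matrix (Fin K) (Fin K) ℂ := (hM.eigenvectorUnitary : Matrix (Fin K) (Fin K) ℂ) with hQdef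
  set d : Fin K → ℝ := hM.eigenvalues with hddef
  have hQmem := hM.eigenvectorUnitary.2
  have hQ1 : Qᴴ * Q = 1 := by
    rw [← Matrix.star_eq_conjTranspose]
    exact (Matrix.mem_unitaryGroup_iff'.mp hQmem)
  have hQ2 : Q * Qᴴ = 1 := by
    rw [← Matrix.star_eq_conjTranspose]
    exact (Matrix.mem_unitaryGroup_iff.mp hQmem)
  have hdiag : Qᴴ * (V₀ᴴ * V₀) * Q = Matrix.diagonal fun k => (d k : ℂ) := by
    rw [← Matrix.star_eq_conjTranspose]
    have h := hM.conjStarAlgAut_star_eigenvectorUnitary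
    rw [Unitary.conjStarAlgAut_apply] at h
    simpa [Function.comp_def] using h
  set X₀ : Matrix (Fin N) (Fin K) ℂ := V₀ * Q with hX₀def
  set X₁ : Matrix (Fin N) (Fin K) ℂ := V₁ * Q with hX₁def
  have hX0 : X₀ᴴ * X₀ = Matrix.diagonal fun k => (d k : ℂ) := by
    rw [hX₀def, Matrix.conjTranspose_mul, ← Matrix.mul_assoc, Matrix.mul_assoc Qᴴ V₀ᴴ V₀, hdiag]
  have hX1 : X₁ᴴ * X₁ = Matrix.diagonal fun k => ((1 - d k : ℝ) : ℂ) := by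
    have hV₁V₁ : V₁ᴴ * V₁ = 1 - V₀ᴴ * V₀ := by
      rw [← hsum]; abel
    rw [hX₁def, Matrix.conjTranspose_mul]
    have : Qᴴ * V₁ᴴ * (V₁ * Q) = Qᴴ * (V₁ᴴ * V₁) * Q := by
      rw [← Matrix.mul_assoc, Matrix.mul_assoc Qᴴ V₁ᴴ V₁]
    rw [this, hV₁V₁, Matrix.mul_sub, Matrix.mul_one, Matrix.sub_mul, hQ1, hdiag]
    rw [← Matrix.diagonal_one, Matrix.diagonal_sub]
    congr 1
    funext k
    push_cast
    ring
  have h0 : ∀ k, 0 ≤ d k := by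
    intro k
    apply real_of_sum_conj_mul X₀ (d k) k
    have := congrFun (congrFun hX0 k) k
    simpa [Matrix.mul_apply, Matrix.conjTranspose_apply, Matrix.diagonal] using this
  have h1 : ∀ k, d k ≤ 1 := by
    intro k
    have := real_of_sum_conj_mul X₁ (1 - d k) k (by
      have := congrFun (congrFun hX1 k) k
      simpa [Matrix.mul_apply, Matrix.conjTranspose_apply, Matrix.diagonal] using this)
    linarith
  set dN : Fin N → ℝ := fun i => if h : (i : ℕ) < K then d ⟨i, h⟩ else 1 with hdN
  have hdN0 : ∀ i, 0 ≤ dN i := by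
    intro i; rw [hdN]; dsimp only
    split
    · exact h0 _
    · norm_num
  have hdN1 : ∀ i, dN i ≤ 1 := by
    intro i; rw [hdN]; dsimp only
    split
    · exact h1 _
    · norm_num
  set c : Fin N → ℝ := fun i => Real.sqrt (dN i) with hc
  set s : Fin N → ℝ := fun i => Real.sqrt (1 - dN i) with hs
  have hc2 : ∀ i, c i ^ 2 = dN i := fun i => Real.sq_sqrt (hdN0 i)
  have hs2 : ∀ i, s i ^ 2 = 1 - dN i := fun i => Real.sq_sqrt (by linarith [hdN1 i])
  have hcastd : ∀ k : Fin K, dN (Fin.castLE hK k) = d k := by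
    intro k
    rw [hdN]
    dsimp only
    rw [dif_pos (by simpa using k.isLt)]
    exact congrArg d (by ext; simp)
  have key0 : X₀ᴴ * X₀ = Matrix.diagonal fun k => ((c (Fin.castLE hK k) : ℂ)) ^ 2 := by
    have harg : (fun k => ((d k : ℂ))) = fun k => ((c (Fin.castLE hK k) : ℂ)) ^ 2 := by
      funext k
      rw [← Complex.ofReal_pow, hc2, hcastd k]
    rw [hX0, harg]
  have key1 : X₁ᴴ * X₁ = Matrix.diagonal fun k => ((s (Fin.castLE hK k) : ℂ)) ^ 2 := by
    have harg : (fun k => (((1 - d k : ℝ) : ℂ))) = fun k => ((s (Fin.castLE hK k) : ℂ)) ^ 2 := by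
      funext k
      rw [← Complex.ofReal_pow, hs2, hcastd k]
    rw [hX1, harg]
  obtain ⟨A₀, hA₀u, hA₀⟩ := exists_unitary_factor hK X₀ c (fun i => Real.sqrt_nonneg _) key0
  obtain ⟨A₁, hA₁u, hA₁⟩ := exists_unitary_factor hK X₁ s (fun i => Real.sqrt_nonneg _) key1
  set E : Matrix (Fin N) (Fin K) ℂ :=
    Matrix.of fun i k => if i = Fin.castLE hK k then (1 : ℂ) else 0 with hE
  have hEE : Eᴴ * E = 1 := by
    ext k l
    rw [Matrix.mul_apply]
    rw [Finset.sum_eq_single (Fin.castLE hK k)]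
    · by_cases hkl : k = l
      · subst hkl; simp [hE, Matrix.one_apply]
      · have : Fin.castLE hK k ≠ Fin.castLE hK l := by
          simpa [Fin.castLE_inj] using hkl
        simp [hE, Matrix.one_apply, hkl, this]
    · intro j _ hj
      simp [hE, Matrix.conjTranspose_apply, hj]
    · simp
  set W : Matrix (Fin N) (Fin K) ℂ := E * Qᴴ with hWdef
  have hW : Wᴴ * W = 1 := by
    rw [hWdef, Matrix.conjTranspose_mul, Matrix.conjTranspose_conjTranspose]
    have : Q * Eᴴ * (E * Qᴴ) = Q * (Eᴴ * E) * Qᴴ := by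
      rw [← Matrix.mul_assoc, Matrix.mul_assoc Q Eᴴ E]
    rw [this, hEE, Matrix.mul_one, hQ2]
  refine ⟨A₀, A₁, c, s, W, hA₀u, hA₁u, ?_, hW, ?_, ?_⟩
  · have hr1 : ∀ i, (c i : ℂ) * c i + (s i : ℂ) * s i = 1 := by
      intro i
      have h : c i * c i + s i * s i = 1 := by nlinarith [hc2 i, hs2 i]
      exact_mod_cast congrArg Complex.ofReal h
    rw [sq, sq, Matrix.diagonal_mul_diagonal, Matrix.diagonal_mul_diagonal,
      Matrix.diagonal_add]
    ext i j
    by_cases hij : i = j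
    · subst hij
      simp [Matrix.diagonal_apply_eq, Matrix.one_apply, hr1 i]
    · simp [Matrix.diagonal_apply_ne _ hij, Matrix.one_apply, hij]
  · rw [hWdef, ← Matrix.mul_assoc, ← hA₀, hX₀def, Matrix.mul_assoc, hQ2, Matrix.mul_one]
  · rw [hWdef, ← Matrix.mul_assoc, ← hA₁, hX₁def, Matrix.mul_assoc, hQ2, Matrix.mul_one]
end

section
/- For every 2×2 complex unitary matrix U there exist A, B, C ∈ SU(2) and δ ∈ ℝ such that, setting E := [[1,0],[0,e^{iδ}]], the controlled-U gate [[I₂,0],[0,U]] (the 4×4 block matrix with blocks I₂ and U on the diagonal) equals (I₂⊗A) · CNOT · (I₂⊗B) · CNOT · (E⊗C). -/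
open Matrix Complex Kronecker

/-- The NOT gate `σx`. -/
def σx : Matrix (Fin 2) (Fin 2) ℂ := !![0, 1; 1, 0]

/-- The projector `|0⟩⟨0|`. -/
def P0 : Matrix (Fin 2) (Fin 2) ℂ := !![1, 0; 0, 0]

/-- The projector `|1⟩⟨1|`. -/
def P1 : Matrix (Fin 2) (Fin 2) ℂ := !![0, 0; 0, 1]

/-- The CNOT gate `|0⟩⟨0|⊗I₂ + |1⟩⟨1|⊗σx`. -/
def CNOT : Matrix (Fin 2 × Fin 2) (Fin 2 × Fin 2) ℂ :=
  P0 ⊗ₖ (1 : Matrix (Fin 2) (Fin 2) ℂ) + P1 ⊗ₖ σx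

noncomputable def Rz (u : ℝ) : Matrix (Fin 2) (Fin 2) ℂ :=
  !![Complex.exp (-u * I), 0; 0, Complex.exp (u * I)]
noncomputable def Ry (u : ℝ) : Matrix (Fin 2) (Fin 2) ℂ :=
  !![(Real.cos u : ℂ), -(Real.sin u : ℂ); (Real.sin u : ℂ), (Real.cos u : ℂ)]

lemma Rz_mul (u v : ℝ) : Rz u * Rz v = Rz (u + v) := by
  simp [Rz, Matrix.mul_fin_two, ← Complex.exp_add]
  ring_nf
  exact ⟨trivial, trivial⟩

lemma Ry_mul (u v : ℝ) : Ry u * Ry v = Ry (u + v) := by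
  simp [Ry, Matrix.mul_fin_two, Real.cos_add, Real.sin_add]
  ring_nf
  exact ⟨trivial, trivial⟩

lemma Rz_zero : Rz 0 = 1 := by
  simp [Rz]; ext i j; fin_cases i <;> fin_cases j <;> simp

lemma Ry_zero : Ry 0 = 1 := by
  simp [Ry]; ext i j; fin_cases i <;> fin_cases j <;> simp

lemma sx_sx : σx * σx = 1 := by
  simp [σx, Matrix.mul_fin_two]; ext i j; fin_cases i <;> fin_cases j <;> simp

lemma Rz_sx (u : ℝ) : Rz u * σx = σx * Rz (-u) := by
  simp [Rz, σx, Matrix.mul_fin_two]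

lemma Ry_sx (u : ℝ) : Ry u * σx = σx * Ry (-u) := by
  simp [Ry, σx, Matrix.mul_fin_two]

lemma Rz_det (u : ℝ) : (Rz u).det = 1 := by
  simp [Rz, Matrix.det_fin_two_of, ← Complex.exp_add]

lemma Ry_det (u : ℝ) : (Ry u).det = 1 := by
  simp [Ry, Matrix.det_fin_two_of]
  norm_cast
  rw [← Real.cos_sq_add_sin_sq u]; ring

lemma Rz_star (u : ℝ) : star (Rz u) = Rz (-u) := by
  ext i j
  fin_cases i <;> fin_cases j <;>
    simp [Rz, ← Complex.exp_conj, Matrix.conjTranspose_apply]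

lemma Ry_star (u : ℝ) : star (Ry u) = Ry (-u) := by
  ext i j
  fin_cases i <;> fin_cases j <;>
    simp [Ry, Matrix.conjTranspose_apply, ← Complex.ofReal_cos, ← Complex.ofReal_sin, Complex.conj_ofReal]

lemma Rz_unitary (u : ℝ) : Rz u ∈ Matrix.unitaryGroup (Fin 2) ℂ := by
  rw [Matrix.mem_unitaryGroup_iff]
  rw [Rz_star, Rz_mul]
  simp [Rz_zero]

lemma Ry_unitary (u : ℝ) : Ry u ∈ Matrix.unitaryGroup (Fin 2) ℂ := by
  rw [Matrix.mem_unitaryGroup_iff]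
  rw [Ry_star, Ry_mul]
  simp [Ry_zero]

lemma P0_mul_P0 : P0 * P0 = P0 := by
  ext i j; fin_cases i <;> fin_cases j <;> simp [P0, Matrix.mul_apply, Fin.sum_univ_succ]
lemma P0_mul_P1 : P0 * P1 = 0 := by
  ext i j; fin_cases i <;> fin_cases j <;> simp [P0, P1, Matrix.mul_apply, Fin.sum_univ_succ]
lemma P1_mul_P0 : P1 * P0 = 0 := by
  ext i j; fin_cases i <;> fin_cases j <;> simp [P0, P1, Matrix.mul_apply, Fin.sum_univ_succ]
lemma P1_mul_P1 : P1 * P1 = P1 := by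
  ext i j; fin_cases i <;> fin_cases j <;> simp [P1, Matrix.mul_apply, Fin.sum_univ_succ]

lemma key (A B C : Matrix (Fin 2) (Fin 2) ℂ) (e : ℂ) :
    ((1 : Matrix (Fin 2) (Fin 2) ℂ) ⊗ₖ A) * CNOT
      * ((1 : Matrix (Fin 2) (Fin 2) ℂ) ⊗ₖ B) * CNOT * ((P0 + e • P1) ⊗ₖ C)
    = P0 ⊗ₖ (A * B * C) + e • (P1 ⊗ₖ (A * σx * B * σx * C)) := by
  simp only [CNOT, add_mul, mul_add, Matrix.add_kronecker, Matrix.smul_kronecker,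
    ← Matrix.mul_kronecker_mul, mul_smul_comm, smul_mul_assoc, one_mul, mul_one,
    Matrix.mul_one, Matrix.one_mul, P0_mul_P0, P0_mul_P1, P1_mul_P0, P1_mul_P1,
    Matrix.zero_kronecker, smul_zero, add_zero, zero_add]

lemma sx_Ry' (u : ℝ) (X : Matrix (Fin 2) (Fin 2) ℂ) :
    σx * (Ry u * X) = Ry (-u) * (σx * X) := by
  have h : σx * Ry u = Ry (-u) * σx := by rw [Ry_sx, neg_neg]
  rw [← Matrix.mul_assoc, h, Matrix.mul_assoc]

lemma sx_Rz' (u : ℝ) (X : Matrix (Fin 2) (Fin 2) ℂ) :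
    σx * (Rz u * X) = Rz (-u) * (σx * X) := by
  have h : σx * Rz u = Rz (-u) * σx := by rw [Rz_sx, neg_neg]
  rw [← Matrix.mul_assoc, h, Matrix.mul_assoc]

lemma sx_sx' (X : Matrix (Fin 2) (Fin 2) ℂ) : σx * (σx * X) = X := by
  rw [← Matrix.mul_assoc, sx_sx, Matrix.one_mul]

lemma Ry_mul' (u v : ℝ) (X : Matrix (Fin 2) (Fin 2) ℂ) :
    Ry u * (Ry v * X) = Ry (u + v) * X := by
  rw [← Matrix.mul_assoc, Ry_mul]

lemma Rz_mul' (u v : ℝ) (X : Matrix (Fin 2) (Fin 2) ℂ) :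
    Rz u * (Rz v * X) = Rz (u + v) * X := by
  rw [← Matrix.mul_assoc, Rz_mul]

lemma decomp1 (p q t : ℝ) :
    (Rz p * Ry (t/2)) * (Ry (-(t/2)) * Rz (-((p+q)/2))) * Rz ((q-p)/2) = 1 := by
  simp only [Matrix.mul_assoc, Ry_mul', Rz_mul', Rz_mul]
  rw [show t/2 + -(t/2) = 0 by ring, Ry_zero, Matrix.one_mul,
    show -((p+q)/2) + (q-p)/2 = -p by ring, Rz_mul, show p + -p = 0 by ring, Rz_zero]

lemma decomp2 (p q t : ℝ) :
    (Rz p * Ry (t/2)) * σx * (Ry (-(t/2)) * Rz (-((p+q)/2))) * σx * Rz ((q-p)/2)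
      = Rz p * (Ry t * Rz q) := by
  simp only [Matrix.mul_assoc, sx_Ry', sx_Rz', sx_sx', Ry_mul', Rz_mul', Rz_mul]
  rw [show -(-(t/2)) = t/2 by ring, show t/2 + t/2 = t by ring,
    show -(-((p+q)/2)) + (q-p)/2 = q by ring]

lemma conj_eq_abs_exp (z : ℂ) :
    (starRingEnd ℂ) z = (‖z‖ : ℂ) * Complex.exp (-(z.arg : ℂ) * I) := by
  conv_lhs => rw [← Complex.norm_mul_exp_arg_mul_I z]
  rw [_root_.map_mul, Complex.conj_ofReal, ← Complex.exp_conj, _root_.map_mul,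
    Complex.conj_ofReal, Complex.conj_I]
  ring_nf

lemma euler (V : Matrix (Fin 2) (Fin 2) ℂ) (hV : V ∈ Matrix.unitaryGroup (Fin 2) ℂ)
    (hdet : V.det = 1) : ∃ p q t : ℝ, V = Rz p * (Ry t * Rz q) := by
  have hstar : star V * V = 1 := Matrix.mem_unitaryGroup_iff'.mp hV
  have h2 : V * V.adjugate = 1 := by rw [Matrix.mul_adjugate, hdet, one_smul]
  have hadj : star V = V.adjugate := by
    calc star V = star V * (V * V.adjugate) := by rw [h2, mul_one]
      _ = (star V * V) * V.adjugate := by rw [mul_assoc]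
      _ = V.adjugate := by rw [hstar, one_mul]
  set a := V 0 0 with ha
  set b := V 1 0 with hb
  have hadj' : V.adjugate = !![V 1 1, -(V 0 1); -(V 1 0), V 0 0] := Matrix.adjugate_fin_two V
  have h01 : V 0 1 = -((starRingEnd ℂ) b) := by
    have := congrFun (congrFun (hadj.trans hadj') 0) 1
    simp [Matrix.conjTranspose_apply] at this
    rw [← hb] at this
    rw [this, neg_neg]
  have h11 : V 1 1 = (starRingEnd ℂ) a := by
    have := congrFun (congrFun (hadj.trans hadj') 0) 0
    simpa [Matrix.conjTranspose_apply] using this.symm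
  have hnorm : ‖a‖ ^ 2 + ‖b‖ ^ 2 = 1 := by
    have h00 := congrFun (congrFun hstar 0) 0
    rw [Matrix.mul_apply] at h00
    simp [Fin.sum_univ_succ, Matrix.conjTranspose_apply] at h00
    have h : (Complex.normSq a : ℂ) + (Complex.normSq b : ℂ) = 1 := by
      rw [← Complex.mul_conj, ← Complex.mul_conj, mul_comm a, mul_comm b]
      exact h00
    have h' : Complex.normSq a + Complex.normSq b = 1 := by exact_mod_cast h
    rw [Complex.sq_norm, Complex.sq_norm]
    exact h'
  have hb1 : ‖b‖ ≤ 1 := by nlinarith [norm_nonneg b, norm_nonneg a]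
  refine ⟨(b.arg - a.arg)/2, (-b.arg - a.arg)/2, Real.arcsin (‖b‖), ?_⟩
  have hsin : Real.sin (Real.arcsin (‖b‖)) = ‖b‖ :=
    Real.sin_arcsin (by linarith [norm_nonneg b]) hb1
  have hcos : Real.cos (Real.arcsin (‖b‖)) = ‖a‖ := by
    rw [Real.cos_arcsin, show 1 - ‖b‖ ^ 2 = ‖a‖ ^ 2 by linarith]
    exact Real.sqrt_sq (norm_nonneg a)
  rw [Rz, Ry, Rz, Matrix.mul_fin_two, Matrix.mul_fin_two]
  ext i j
  fin_cases i <;> fin_cases j <;> simp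
  · rw [← Complex.ofReal_cos, hcos, ← ha]
    conv_lhs => rw [← Complex.norm_mul_exp_arg_mul_I a]
    rw [mul_left_comm, ← Complex.exp_add]
    congr 2
    ring
  · rw [← Complex.ofReal_sin, hsin, h01, conj_eq_abs_exp, neg_inj]
    rw [mul_left_comm, ← Complex.exp_add]
    congr 2
    ring
  · rw [← Complex.ofReal_sin, hsin, ← hb]
    conv_lhs => rw [← Complex.norm_mul_exp_arg_mul_I b]
    rw [mul_left_comm, ← Complex.exp_add]
    congr 2
    ring
  · rw [← Complex.ofReal_cos, hcos, h11, conj_eq_abs_exp]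
    rw [mul_left_comm, ← Complex.exp_add]
    congr 2
    ring

/-- Every controlled single-qubit gate can be decomposed using two CNOT gates,
three special unitary gates `A`, `B`, `C` and a diagonal gate
`E = diag(1, e^{iδ})`. -/
theorem controlled_gate_decomposition (U : Matrix (Fin 2) (Fin 2) ℂ)
    (hU : U ∈ Matrix.unitaryGroup (Fin 2) ℂ) :
    ∃ (A B C : Matrix (Fin 2) (Fin 2) ℂ) (δ : ℝ),
      A ∈ Matrix.unitaryGroup (Fin 2) ℂ ∧ A.det = 1 ∧
      B ∈ Matrix.unitaryGroup (Fin 2) ℂ ∧ B.det = 1 ∧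
      C ∈ Matrix.unitaryGroup (Fin 2) ℂ ∧ C.det = 1 ∧
      P0 ⊗ₖ (1 : Matrix (Fin 2) (Fin 2) ℂ) + P1 ⊗ₖ U =
        ((1 : Matrix (Fin 2) (Fin 2) ℂ) ⊗ₖ A) * CNOT
          * ((1 : Matrix (Fin 2) (Fin 2) ℂ) ⊗ₖ B) * CNOT
          * (!![1, 0; 0, Complex.exp ((δ : ℂ) * Complex.I)] ⊗ₖ C) := by
  set d := U.det with hd
  have hdu : d ∈ unitary ℂ := Matrix.det_of_mem_unitary hU
  have habs : ‖d‖ = 1 := by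
    have h1 : (starRingEnd ℂ) d * d = 1 := hdu.1
    have h2 : d * (starRingEnd ℂ) d = (Complex.normSq d : ℂ) := Complex.mul_conj d
    rw [mul_comm] at h1
    rw [h1] at h2
    have h3 : Complex.normSq d = 1 := by exact_mod_cast h2.symm
    have h4 : ‖d‖ ^ 2 = 1 := by rw [Complex.sq_norm]; exact h3
    nlinarith [norm_nonneg d]
  set δ := d.arg / 2 with hδ
  set e := Complex.exp ((δ : ℂ) * Complex.I) with he
  set f := Complex.exp (-(δ : ℂ) * Complex.I) with hf
  have hef : e * f = 1 := by
    rw [he, hf, ← Complex.exp_add, show (δ:ℂ)*Complex.I + -(δ:ℂ)*Complex.I = 0 by ring,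
      Complex.exp_zero]
  have hfe : f * e = 1 := by rw [mul_comm]; exact hef
  have hee : e * e = d := by
    rw [he, ← Complex.exp_add, ← add_mul, hδ]
    push_cast
    rw [show (d.arg/2 : ℂ) + (d.arg/2 : ℂ) = (d.arg : ℂ) by ring]
    conv_rhs => rw [← Complex.norm_mul_exp_arg_mul_I d]
    rw [habs]
    simp
  set V := f • U with hV
  have hVu : V ∈ Matrix.unitaryGroup (Fin 2) ℂ := by
    rw [Matrix.mem_unitaryGroup_iff']
    have hUs : star U * U = 1 := Matrix.mem_unitaryGroup_iff'.mp hU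
    rw [hV, star_smul, Matrix.smul_mul, Matrix.mul_smul, smul_smul]
    have hsf : star f = e := by
      rw [hf, he, star_def, ← Complex.exp_conj]
      congr 1
      simp [Complex.conj_ofReal]
    rw [hsf, hef, hUs, one_smul]
  have hVdet : V.det = 1 := by
    rw [hV, Matrix.det_smul, ← hd, Fintype.card_fin, ← hee,
      show f ^ 2 * (e * e) = (f * e) * (f * e) by ring, hfe, one_mul]
  obtain ⟨p, q, t, hVeq⟩ := euler V hVu hVdet
  refine ⟨Rz p * Ry (t/2), Ry (-(t/2)) * Rz (-((p+q)/2)), Rz ((q-p)/2), δ,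
    mul_mem (Rz_unitary p) (Ry_unitary (t/2)),
    by rw [Matrix.det_mul, Rz_det, Ry_det, mul_one],
    mul_mem (Ry_unitary (-(t/2))) (Rz_unitary (-((p+q)/2))),
    by rw [Matrix.det_mul, Rz_det, Ry_det, mul_one],
    Rz_unitary _, Rz_det _, ?_⟩
  have hE : !![1, 0; 0, e] = P0 + e • P1 := by
    ext i j
    fin_cases i <;> fin_cases j <;> simp [P0, P1]
  rw [hE, key, decomp1, decomp2, ← hVeq, hV, Matrix.kronecker_smul, smul_smul, hef, one_smul]
end

section
/- Let M ≥ 1, let P be an M×M complex matrix with P² = P, and let V be a 2×2 complex unitary matrix; set U := V·V. Define on ℂ^M⊗ℂ²⊗ℂ² the matrices G₁ := I_M ⊗ (|0⟩⟨0|⊗I₂ + |1⟩⟨1|⊗V), G₂ := (I_M − P)⊗I₂⊗I₂ + P⊗σx⊗I₂, G₃ := I_M ⊗ (|0⟩⟨0|⊗I₂ + |1⟩⟨1|⊗V†), and G₅ := (I_M − P)⊗I₂⊗I₂ + P⊗I₂⊗V. Then G₅ · G₂ · G₃ · G₂ · G₁ = I_{4M} + P ⊗ |1⟩⟨1| ⊗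 (U − I₂). -/
open Matrix Complex Kronecker

private lemma subk {l m n p : Type*} (A B : Matrix l m ℂ)
    (C : Matrix n p ℂ) : (A - B) ⊗ₖ C = A ⊗ₖ C - B ⊗ₖ C := by
  ext i j
  simp [Matrix.kroneckerMap_apply, sub_mul]

private lemma ksub {l m n p : Type*} (A : Matrix l m ℂ)
    (B C : Matrix n p ℂ) : A ⊗ₖ (B - C) = A ⊗ₖ B - A ⊗ₖ C := by
  ext i j
  simp [Matrix.kroneckerMap_apply, mul_sub]

/-- Decomposition of a multi-controlled gate, controlled on the range of a
projection `P` of an `M`-dimensional control register and on the state `|1⟩` of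
a middle qubit, applying `U = V·V` to the last qubit:
`G₅·G₂·G₃·G₂·G₁ = I + P⊗|1⟩⟨1|⊗(U−I₂)`.  Factors are associated as
`(register × middle qubit) × last qubit`. -/
theorem multi_controlled_gate_decomposition (M : ℕ) (hM : 1 ≤ M)
    (P : Matrix (Fin M) (Fin M) ℂ) (hP : P * P = P)
    (V : Matrix (Fin 2) (Fin 2) ℂ) (hV : V ∈ Matrix.unitaryGroup (Fin 2) ℂ) :
    (((1 : Matrix (Fin M) (Fin M) ℂ) - P) ⊗ₖ (1 : Matrix (Fin 2) (Fin 2) ℂ)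
          ⊗ₖ (1 : Matrix (Fin 2) (Fin 2) ℂ)
        + (P ⊗ₖ (1 : Matrix (Fin 2) (Fin 2) ℂ)) ⊗ₖ V)              -- G₅
      * (((1 : Matrix (Fin M) (Fin M) ℂ) - P) ⊗ₖ (1 : Matrix (Fin 2) (Fin 2) ℂ)
          ⊗ₖ (1 : Matrix (Fin 2) (Fin 2) ℂ)
        + (P ⊗ₖ σx) ⊗ₖ (1 : Matrix (Fin 2) (Fin 2) ℂ))            -- G₂
      * (((1 : Matrix (Fin M) (Fin M) ℂ) ⊗ₖ P0) ⊗ₖ (1 : Matrix (Fin 2) (Fin 2) ℂ)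
        + ((1 : Matrix (Fin M) (Fin M) ℂ) ⊗ₖ P1) ⊗ₖ Vᴴ)           -- G₃
      * (((1 : Matrix (Fin M) (Fin M) ℂ) - P) ⊗ₖ (1 : Matrix (Fin 2) (Fin 2) ℂ)
          ⊗ₖ (1 : Matrix (Fin 2) (Fin 2) ℂ)
        + (P ⊗ₖ σx) ⊗ₖ (1 : Matrix (Fin 2) (Fin 2) ℂ))            -- G₂
      * (((1 : Matrix (Fin M) (Fin M) ℂ) ⊗ₖ P0) ⊗ₖ (1 : Matrix (Fin 2) (Fin 2) ℂ)
        + ((1 : Matrix (Fin M) (Fin M) ℂ) ⊗ₖ P1) ⊗ₖ V)            -- G₁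
    = (1 : Matrix ((Fin M × Fin 2) × Fin 2) ((Fin M × Fin 2) × Fin 2) ℂ)
        + (P ⊗ₖ P1) ⊗ₖ (V * V - 1) := by
  have hss : Vᴴ * V = 1 := by
    simpa [Matrix.star_eq_conjTranspose] using hV.1
  have hss' : V * Vᴴ = 1 := by
    simpa [Matrix.star_eq_conjTranspose] using hV.2
  set A : Matrix (Fin 2) (Fin 2) ℂ := !![0,0;1,0] with hA
  set B : Matrix (Fin 2) (Fin 2) ℂ := !![0,1;0,0] with hB
  have sm : ∀ X Y Z : Matrix (Fin 2) (Fin 2) ℂ, X * Y = Z → X * Y = Z := fun _ _ _ h => h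
  have e00 : P0 * P0 = P0 := by ext i j; fin_cases i <;> fin_cases j <;> simp [P0, Matrix.mul_apply, Fin.sum_univ_two]
  have e11 : P1 * P1 = P1 := by ext i j; fin_cases i <;> fin_cases j <;> simp [P1, Matrix.mul_apply, Fin.sum_univ_two]
  have e01 : P0 * P1 = 0 := by ext i j; fin_cases i <;> fin_cases j <;> simp [P0, P1, Matrix.mul_apply, Fin.sum_univ_two]
  have e10 : P1 * P0 = 0 := by ext i j; fin_cases i <;> fin_cases j <;> simp [P0, P1, Matrix.mul_apply, Fin.sum_univ_two]
  have ex0 : σx * P0 = A := by ext i j; fin_cases i <;> fin_cases j <;> simp [σx, P0, hA, Matrix.mul_apply, Fin.sum_univ_two]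
  have ex1 : σx * P1 = B := by ext i j; fin_cases i <;> fin_cases j <;> simp [σx, P1, hB, Matrix.mul_apply, Fin.sum_univ_two]
  have e0A : P0 * A = 0 := by ext i j; fin_cases i <;> fin_cases j <;> simp [P0, hA, Matrix.mul_apply, Fin.sum_univ_two]
  have e0B : P0 * B = B := by ext i j; fin_cases i <;> fin_cases j <;> simp [P0, hB, Matrix.mul_apply, Fin.sum_univ_two]
  have e1A : P1 * A = A := by ext i j; fin_cases i <;> fin_cases j <;> simp [P1, hA, Matrix.mul_apply, Fin.sum_univ_two]
  have e1B : P1 * B = 0 := by ext i j; fin_cases i <;> fin_cases j <;> simp [P1, hB, Matrix.mul_apply, Fin.sum_univ_two]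
  have exA : σx * A = P0 := by ext i j; fin_cases i <;> fin_cases j <;> simp [σx, P0, hA, Matrix.mul_apply, Fin.sum_univ_two]
  have exB : σx * B = P1 := by ext i j; fin_cases i <;> fin_cases j <;> simp [σx, P1, hB, Matrix.mul_apply, Fin.sum_univ_two]
  have e01' : P0 + P1 = 1 := by
    ext i j; fin_cases i <;> fin_cases j <;> simp [P0, P1, Matrix.one_apply]
  have hQP : ((1 : Matrix (Fin M) (Fin M) ℂ) - P) * P = 0 := by
    rw [sub_mul, hP, one_mul, sub_self]
  have hPQ : P * ((1 : Matrix (Fin M) (Fin M) ℂ) - P) = 0 := by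
    rw [mul_sub, hP, mul_one, sub_self]
  have hQQ : ((1 : Matrix (Fin M) (Fin M) ℂ) - P) * ((1 : Matrix (Fin M) (Fin M) ℂ) - P)
      = (1 : Matrix (Fin M) (Fin M) ℂ) - P := by
    rw [sub_mul, one_mul, hPQ, sub_zero]
  have h1 :
      (((1 : Matrix (Fin M) (Fin M) ℂ) - P) ⊗ₖ (1 : Matrix (Fin 2) (Fin 2) ℂ)
          ⊗ₖ (1 : Matrix (Fin 2) (Fin 2) ℂ)
        + (P ⊗ₖ σx) ⊗ₖ (1 : Matrix (Fin 2) (Fin 2) ℂ))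
      * (((1 : Matrix (Fin M) (Fin M) ℂ) ⊗ₖ P0) ⊗ₖ (1 : Matrix (Fin 2) (Fin 2) ℂ)
        + ((1 : Matrix (Fin M) (Fin M) ℂ) ⊗ₖ P1) ⊗ₖ V)
      = (((1 : Matrix (Fin M) (Fin M) ℂ) - P) ⊗ₖ P0) ⊗ₖ (1 : Matrix (Fin 2) (Fin 2) ℂ)
        + (((1 : Matrix (Fin M) (Fin M) ℂ) - P) ⊗ₖ P1) ⊗ₖ V
        + ((P ⊗ₖ A) ⊗ₖ (1 : Matrix (Fin 2) (Fin 2) ℂ) + (P ⊗ₖ B) ⊗ₖ V) := by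
    simp only [add_mul, mul_add, ← Matrix.mul_kronecker_mul, one_mul, mul_one, ex0, ex1]
    abel
  have h2 :
      (((1 : Matrix (Fin M) (Fin M) ℂ) ⊗ₖ P0) ⊗ₖ (1 : Matrix (Fin 2) (Fin 2) ℂ)
        + ((1 : Matrix (Fin M) (Fin M) ℂ) ⊗ₖ P1) ⊗ₖ Vᴴ)
      * ((((1 : Matrix (Fin M) (Fin M) ℂ) - P) ⊗ₖ P0) ⊗ₖ (1 : Matrix (Fin 2) (Fin 2) ℂ)
        + (((1 : Matrix (Fin M) (Fin M) ℂ) - P) ⊗ₖ P1) ⊗ₖ V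
        + ((P ⊗ₖ A) ⊗ₖ (1 : Matrix (Fin 2) (Fin 2) ℂ) + (P ⊗ₖ B) ⊗ₖ V))
      = (((1 : Matrix (Fin M) (Fin M) ℂ) - P) ⊗ₖ P0) ⊗ₖ (1 : Matrix (Fin 2) (Fin 2) ℂ)
        + (((1 : Matrix (Fin M) (Fin M) ℂ) - P) ⊗ₖ P1) ⊗ₖ (1 : Matrix (Fin 2) (Fin 2) ℂ)
        + ((P ⊗ₖ B) ⊗ₖ V + (P ⊗ₖ A) ⊗ₖ Vᴴ) := by
    simp only [add_mul, mul_add, ← Matrix.mul_kronecker_mul, one_mul, mul_one,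
      e00, e11, e01, e10, e0A, e0B, e1A, e1B, hss,
      Matrix.zero_kronecker, Matrix.kronecker_zero, add_zero, zero_add]
    abel
  have h3 :
      (((1 : Matrix (Fin M) (Fin M) ℂ) - P) ⊗ₖ (1 : Matrix (Fin 2) (Fin 2) ℂ)
          ⊗ₖ (1 : Matrix (Fin 2) (Fin 2) ℂ)
        + (P ⊗ₖ σx) ⊗ₖ (1 : Matrix (Fin 2) (Fin 2) ℂ))
      * ((((1 : Matrix (Fin M) (Fin M) ℂ) - P) ⊗ₖ P0) ⊗ₖ (1 : Matrix (Fin 2) (Fin 2) ℂ)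
        + (((1 : Matrix (Fin M) (Fin M) ℂ) - P) ⊗ₖ P1) ⊗ₖ (1 : Matrix (Fin 2) (Fin 2) ℂ)
        + ((P ⊗ₖ B) ⊗ₖ V + (P ⊗ₖ A) ⊗ₖ Vᴴ))
      = (((1 : Matrix (Fin M) (Fin M) ℂ) - P) ⊗ₖ P0) ⊗ₖ (1 : Matrix (Fin 2) (Fin 2) ℂ)
        + (((1 : Matrix (Fin M) (Fin M) ℂ) - P) ⊗ₖ P1) ⊗ₖ (1 : Matrix (Fin 2) (Fin 2) ℂ)
        + ((P ⊗ₖ P1) ⊗ₖ V + (P ⊗ₖ P0) ⊗ₖ Vᴴ) := by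
    simp only [add_mul, mul_add, ← Matrix.mul_kronecker_mul, one_mul, mul_one,
      hQQ, hQP, hPQ, hP, exA, exB,
      Matrix.zero_kronecker, Matrix.kronecker_zero, add_zero, zero_add]
  have h4 :
      (((1 : Matrix (Fin M) (Fin M) ℂ) - P) ⊗ₖ (1 : Matrix (Fin 2) (Fin 2) ℂ)
          ⊗ₖ (1 : Matrix (Fin 2) (Fin 2) ℂ)
        + (P ⊗ₖ (1 : Matrix (Fin 2) (Fin 2) ℂ)) ⊗ₖ V)
      * ((((1 : Matrix (Fin M) (Fin M) ℂ) - P) ⊗ₖ P0) ⊗ₖ (1 : Matrix (Fin 2) (Fin 2) ℂ)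
        + (((1 : Matrix (Fin M) (Fin M) ℂ) - P) ⊗ₖ P1) ⊗ₖ (1 : Matrix (Fin 2) (Fin 2) ℂ)
        + ((P ⊗ₖ P1) ⊗ₖ V + (P ⊗ₖ P0) ⊗ₖ Vᴴ))
      = (((1 : Matrix (Fin M) (Fin M) ℂ) - P) ⊗ₖ P0) ⊗ₖ (1 : Matrix (Fin 2) (Fin 2) ℂ)
        + (((1 : Matrix (Fin M) (Fin M) ℂ) - P) ⊗ₖ P1) ⊗ₖ (1 : Matrix (Fin 2) (Fin 2) ℂ)
        + ((P ⊗ₖ P1) ⊗ₖ (V * V) + (P ⊗ₖ P0) ⊗ₖ (1 : Matrix (Fin 2) (Fin 2) ℂ)) := by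
    simp only [add_mul, mul_add, ← Matrix.mul_kronecker_mul, one_mul, mul_one,
      hQQ, hQP, hPQ, hP, hss',
      Matrix.zero_kronecker, Matrix.kronecker_zero, add_zero, zero_add]
  rw [mul_assoc, mul_assoc, mul_assoc, h1, h2, h3, h4]
  have key1 : ((1:Matrix (Fin M) (Fin M) ℂ) ⊗ₖ P0) ⊗ₖ (1:Matrix (Fin 2) (Fin 2) ℂ)
      + ((1:Matrix (Fin M) (Fin M) ℂ) ⊗ₖ P1) ⊗ₖ (1:Matrix (Fin 2) (Fin 2) ℂ)
      = (1:Matrix ((Fin M × Fin 2) × Fin 2) ((Fin M × Fin 2) × Fin 2) ℂ) := by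
    rw [← Matrix.add_kronecker, ← Matrix.kronecker_add, e01',
      Matrix.one_kronecker_one, Matrix.one_kronecker_one]
  rw [← key1, ksub, subk, subk, subk, subk]
  abel
end

section
/- Let n be a natural number, let A and B be disjoint finite subsets of Fin n, and let b, t ∈ Fin n with b ≠ t, b ∉ A∪B, and t ∉ A∪B. For a finite set S ⊆ Fin n and j ∉ S, let T_{S,j} : (Fin n → Bool) → (Fin n → Bool) be the multi-controlled NOT that maps x to the function agreeing with x everywhere except at coordinate j, where its value is x(j) XOR (the conjunction of x(i) over all i ∈ S). Then T_{A∪B, t} = T_{B∪{b}, t} ∘ T_{A, b} ∘ T_{B∪{b}, t} ∘ T_{A, b}. -/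
/-- The multi-controlled NOT on bit strings of length `n`: it flips the `j`-th
bit exactly when all bits indexed by `S` are `true`, leaving the other bits
unchanged. -/
def mcnot {n : ℕ} (S : Finset (Fin n)) (j : Fin n) (x : Fin n → Bool) : Fin n → Bool :=
  Function.update x j (xor (x j) (decide (∀ i ∈ S, x i = true)))

lemma upd_ctrl {n : ℕ} (S : Finset (Fin n)) {j : Fin n} (hj : j ∉ S) (y : Fin n → Bool)
    (v : Bool) :
    decide (∀ i ∈ S, Function.update y j v i = true) = decide (∀ i ∈ S, y i = true) := by
  simp only [decide_eq_decide]
  exact forall₂_congr fun i hi => by rw [Function.update_of_ne (ne_of_mem_of_not_mem hi hj)]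

lemma ctrl_union {n : ℕ} (S T : Finset (Fin n)) (y : Fin n → Bool) :
    decide (∀ i ∈ S ∪ T, y i = true)
      = (decide (∀ i ∈ S, y i = true) && decide (∀ i ∈ T, y i = true)) := by
  simp only [Finset.mem_union, or_imp, forall_and, Bool.decide_and]

/-- A multi-controlled NOT with controls `A ∪ B` can be decomposed into two
multi-controlled NOTs with controls `A` (targeting an auxiliary bit `b`) and
two with controls `B ∪ {b}`. -/
theorem mcnot_split (n : ℕ) (A B : Finset (Fin n)) (hAB : Disjoint A B)
    (b t : Fin n) (hbt : b ≠ t) (hb : b ∉ A ∪ B) (ht : t ∉ A ∪ B) :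
    mcnot (A ∪ B) t
      = mcnot (B ∪ {b}) t ∘ mcnot A b ∘ mcnot (B ∪ {b}) t ∘ mcnot A b := by
  simp only [Finset.mem_union, not_or] at hb ht
  obtain ⟨hbA, hbB⟩ := hb
  obtain ⟨htA, htB⟩ := ht
  have htb : t ≠ b := hbt.symm
  funext x
  set a := decide (∀ i ∈ A, x i = true) with ha
  set c := decide (∀ i ∈ B, x i = true) with hc
  set x1 := mcnot A b x with hx1
  have e1 : x1 = Function.update x b (x b ^^ a) := rfl
  have x1b : x1 b = (x b ^^ a) := by rw [e1, Function.update_self]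
  have x1t : x1 t = x t := by rw [e1, Function.update_of_ne htb]
  have cB1 : decide (∀ i ∈ B, x1 i = true) = c := by rw [e1, upd_ctrl B hbB]
  have cA1 : decide (∀ i ∈ A, x1 i = true) = a := by rw [e1, upd_ctrl A hbA]
  set x2 := mcnot (B ∪ {b}) t x1 with hx2
  have e2 : x2 = Function.update x1 t ((x t) ^^ (c && (x b ^^ a))) := by
    rw [hx2]; unfold mcnot
    rw [ctrl_union, cB1, x1t]
    congr 1
    simp only [Finset.mem_singleton, forall_eq, x1b, Bool.decide_eq_true]
  have x2b : x2 b = (x b ^^ a) := by rw [e2, Function.update_of_ne hbt, x1b]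
  have x2t : x2 t = ((x t) ^^ (c && (x b ^^ a))) := by rw [e2, Function.update_self]
  have cA2 : decide (∀ i ∈ A, x2 i = true) = a := by rw [e2, upd_ctrl A htA, cA1]
  have cB2 : decide (∀ i ∈ B, x2 i = true) = c := by rw [e2, upd_ctrl B htB, cB1]
  set x3 := mcnot A b x2 with hx3
  have e3 : x3 = Function.update x2 b (x b) := by
    rw [hx3]; unfold mcnot
    rw [cA2, x2b]
    congr 1
    cases a <;> simp
  have x3b : x3 b = x b := by rw [e3, Function.update_self]
  have x3t : x3 t = ((x t) ^^ (c && (x b ^^ a))) := by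
    rw [e3, Function.update_of_ne htb, x2t]
  have cB3 : decide (∀ i ∈ B, x3 i = true) = c := by rw [e3, upd_ctrl B hbB, cB2]
  show mcnot (A ∪ B) t x = mcnot (B ∪ {b}) t x3
  have e4 : mcnot (B ∪ {b}) t x3 = Function.update x3 t ((x t) ^^ (c && a)) := by
    unfold mcnot
    rw [ctrl_union, cB3, x3t]
    congr 1
    simp only [Finset.mem_singleton, forall_eq, x3b]
    cases a <;> cases c <;> cases hxb : x b <;> simp
  rw [e4]
  unfold mcnot
  rw [ctrl_union]
  funext i
  rcases eq_or_ne i t with rfl | hit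
  · rw [Function.update_self, Function.update_self, Bool.and_comm]
  · rw [Function.update_of_ne hit, Function.update_of_ne hit, e3, e2, e1]
    rcases eq_or_ne i b with rfl | hib
    · rw [Function.update_self]
    · rw [Function.update_of_ne hib, Function.update_of_ne hit, Function.update_of_ne hib]
end

section
/- For natural numbers m, n with 1 ≤ m ≤ n, the following identity of integers holds: Σ_{k=1}^{2^m−1} |{ s : s < n, the s-th binary digit of k is 0, and k mod 2^{s+1} ≠ 0 }| = 2^{m−1}·(2n − m − 2) − n + m + 1. -/
lemma count_mod_blocks (d t : ℕ) (P : ℕ → Prop) [DecidablePred P] :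
    ((Finset.range (d * t)).filter fun k => P (k % d)).card
      = t * ((Finset.range d).filter P).card := by
  rcases Nat.eq_zero_or_pos d with rfl | hd
  · simp
  have key : ((Finset.range (d * t)).filter fun k => P (k % d)).card
      = (Finset.range t ×ˢ (Finset.range d).filter P).card := by
    apply Finset.card_bij' (fun k _ => (k / d, k % d)) (fun p _ => p.1 * d + p.2)
    · intro k hk
      simp only [Finset.mem_filter, Finset.mem_range] at hk
      simp only [Finset.mem_product, Finset.mem_range, Finset.mem_filter]
      refine ⟨Nat.div_lt_of_lt_mul ?_, Nat.mod_lt _ hd, hk.2⟩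
      omega
    · intro p hp
      simp only [Finset.mem_product, Finset.mem_range, Finset.mem_filter] at hp
      simp only [Finset.mem_filter, Finset.mem_range]
      constructor
      · calc p.1 * d + p.2 < p.1 * d + d := by omega
          _ = (p.1 + 1) * d := by ring
          _ ≤ t * d := Nat.mul_le_mul_right d hp.1
          _ = d * t := Nat.mul_comm _ _
      · rw [Nat.mul_add_mod', Nat.mod_eq_of_lt hp.2.1]
        exact hp.2.2
    · intro k hk
      exact Nat.div_add_mod' k d
    · intro p hp
      simp only [Finset.mem_product, Finset.mem_range, Finset.mem_filter] at hp
      have h1 : (p.1 * d + p.2) / d = p.1 := by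
        rw [mul_comm, Nat.mul_add_div hd, Nat.div_eq_of_lt hp.2.1, Nat.add_zero]
      have h2 : (p.1 * d + p.2) % d = p.2 := by
        rw [Nat.mul_add_mod', Nat.mod_eq_of_lt hp.2.1]
      simp [h1, h2]
  rw [key, Finset.card_product, Finset.card_range]

lemma countA (m s : ℕ) (hm : 1 ≤ m) (hs : m ≤ s) :
    ((Finset.Icc 1 (2 ^ m - 1)).filter fun k =>
        Nat.testBit k s = false ∧ k % 2 ^ (s + 1) ≠ 0).card = 2 ^ m - 1 := by
  rw [Finset.filter_true_of_mem, Nat.card_Icc]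
  · omega
  · intro k hk
    simp only [Finset.mem_Icc] at hk
    have hp : (2:ℕ) ^ m ≤ 2 ^ s := Nat.pow_le_pow_right (by norm_num) hs
    have h1 : (1:ℕ) ≤ 2 ^ s := Nat.one_le_two_pow
    have hlt : k < 2 ^ s := by omega
    have hlt' : k < 2 ^ (s + 1) := by rw [pow_succ]; omega
    refine ⟨Nat.testBit_lt_two_pow hlt, ?_⟩
    rw [Nat.mod_eq_of_lt hlt']
    omega

lemma countB (m s : ℕ) (hs : s < m) :
    ((Finset.Icc 1 (2 ^ m - 1)).filter fun k =>
        Nat.testBit k s = false ∧ k % 2 ^ (s + 1) ≠ 0).card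
      = 2 ^ (m - s - 1) * (2 ^ s - 1) := by
  have h1 : ((Finset.Icc 1 (2 ^ m - 1)).filter fun k =>
        Nat.testBit k s = false ∧ k % 2 ^ (s + 1) ≠ 0)
      = ((Finset.range (2 ^ m)).filter fun k =>
        Nat.testBit (k % 2 ^ (s + 1)) s = false ∧ k % 2 ^ (s + 1) ≠ 0) := by
    ext k
    simp only [Finset.mem_filter, Finset.mem_Icc, Finset.mem_range,
      Nat.testBit_mod_two_pow]
    have h2 : 1 ≤ 2 ^ m := Nat.one_le_two_pow
    constructor
    · rintro ⟨⟨h1k, h2k⟩, hb, hmod⟩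
      exact ⟨by omega, by simp [hb, Nat.lt_succ_iff.mpr (le_refl s)], hmod⟩
    · rintro ⟨hk, hb, hmod⟩
      have hk0 : k ≠ 0 := by rintro rfl; simp at hmod
      refine ⟨⟨by omega, by omega⟩, ?_, hmod⟩
      simpa using hb
  rw [h1]
  have h2m : 2 ^ m = 2 ^ (s + 1) * 2 ^ (m - s - 1) := by
    rw [← pow_add]; congr 1; omega
  rw [h2m, count_mod_blocks (2 ^ (s + 1)) (2 ^ (m - s - 1))
    (fun r => Nat.testBit r s = false ∧ r ≠ 0)]
  congr 1
  have h3 : ((Finset.range (2 ^ (s + 1))).filter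
      fun r => Nat.testBit r s = false ∧ r ≠ 0) = Finset.Icc 1 (2 ^ s - 1) := by
    ext r
    simp only [Finset.mem_filter, Finset.mem_range, Finset.mem_Icc]
    constructor
    · rintro ⟨hr, hb, hr0⟩
      have : r < 2 ^ s := by
        by_contra hge
        push_neg at hge
        have hdiv : r / 2 ^ s = 1 := by
          apply Nat.div_eq_of_lt_le (by omega)
          rw [pow_succ] at hr; omega
        rw [Nat.testBit_eq_decide_div_mod_eq, hdiv] at hb
        simp at hb
      omega
    · rintro ⟨hr1, hr2⟩
      have hs1 : 1 ≤ 2 ^ s := Nat.one_le_two_pow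
      have hrlt : r < 2 ^ s := by omega
      refine ⟨by rw [pow_succ]; omega, Nat.testBit_lt_two_pow hrlt, by omega⟩
  rw [h3, Nat.card_Icc]
  omega

lemma geom2 (n : ℕ) : ∑ j ∈ Finset.range n, (2:ℤ) ^ j = 2 ^ n - 1 := by
  have := geom_sum_mul (2:ℤ) n
  simpa using this

/-- The total number `Q(m,n)` of multi-controlled gates used in the
column-by-column decomposition of an `m` to `n` isometry:
`Σ_{k=1}^{2^m−1} |{s < n : k_s = 0 ∧ k mod 2^{s+1} ≠ 0}|
  = 2^{m−1}(2n − m − 2) − n + m + 1`. -/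
theorem count_multi_controlled_gates (m n : ℕ) (hm : 1 ≤ m) (hmn : m ≤ n) :
    (∑ k ∈ Finset.Icc 1 (2 ^ m - 1),
        (((Finset.range n).filter fun s =>
          Nat.testBit k s = false ∧ k % 2 ^ (s + 1) ≠ 0).card : ℤ))
      = 2 ^ (m - 1) * (2 * (n : ℤ) - (m : ℤ) - 2) - (n : ℤ) + (m : ℤ) + 1 := by
  have swap : (∑ k ∈ Finset.Icc 1 (2 ^ m - 1),
      (((Finset.range n).filter fun s =>
          Nat.testBit k s = false ∧ k % 2 ^ (s + 1) ≠ 0).card : ℤ))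
    = ∑ s ∈ Finset.range n,
        (((Finset.Icc 1 (2 ^ m - 1)).filter fun k =>
          Nat.testBit k s = false ∧ k % 2 ^ (s + 1) ≠ 0).card : ℤ) := by
    simp only [Finset.card_filter]
    push_cast
    exact Finset.sum_comm
  rw [swap]
  obtain ⟨d, rfl⟩ : ∃ d, n = m + d := ⟨n - m, by omega⟩
  rw [Finset.sum_range_add]
  have hA : ∀ j, (((Finset.Icc 1 (2 ^ m - 1)).filter fun k =>
      Nat.testBit k (m + j) = false ∧ k % 2 ^ (m + j + 1) ≠ 0).card : ℤ)
      = 2 ^ m - 1 := by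
    intro j
    rw [countA m (m + j) hm (by omega)]
    have : (1:ℕ) ≤ 2 ^ m := Nat.one_le_two_pow
    push_cast [this]
    ring
  have hB : ∀ s ∈ Finset.range m, (((Finset.Icc 1 (2 ^ m - 1)).filter fun k =>
      Nat.testBit k s = false ∧ k % 2 ^ (s + 1) ≠ 0).card : ℤ)
      = 2 ^ (m - 1) - 2 ^ (m - 1 - s) := by
    intro s hs
    rw [Finset.mem_range] at hs
    rw [countB m s hs]
    have h1 : (1:ℕ) ≤ 2 ^ s := Nat.one_le_two_pow
    push_cast [h1]
    have : (2:ℤ) ^ (m - s - 1) * 2 ^ s = 2 ^ (m - 1) := by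
      rw [← pow_add]; congr 1; omega
    have heq : m - s - 1 = m - 1 - s := by omega
    rw [mul_sub, this, heq, mul_one]
  rw [Finset.sum_congr rfl hB, Finset.sum_congr rfl (fun j _ => hA j)]
  rw [Finset.sum_sub_distrib, Finset.sum_const, Finset.card_range]
  have hrefl : ∑ s ∈ Finset.range m, (2:ℤ) ^ (m - 1 - s)
      = ∑ s ∈ Finset.range m, (2:ℤ) ^ s := by
    exact Finset.sum_range_reflect (fun j => (2:ℤ) ^ j) m
  rw [hrefl, geom2, Finset.sum_const, Finset.card_range]
  obtain ⟨m', rfl⟩ : ∃ m', m = m' + 1 := ⟨m - 1, by omega⟩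
  simp only [Nat.add_sub_cancel]
  push_cast
  ring
end
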